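/- The number of (isomorphism classes of) trees with r ≥ 3 labeled leaves in which every internal vertex has degree exactly 3 is the double factorial (2r − 5)!! = 1·3·5·…·(2r−5). -/

import Mathlib

open SimpleGraph

section Gen
variable {V : Type*} [Fintype V]



lemma card_le_card_edge_of_connected {G : SimpleGraph V} [Fintype G.edgeSet] (hc : G.Connected) :
    Fintype.card V ≤ G.edgeFinset.card + 1 := by
  classical
  have hne : Nonempty V := hc.nonempty
  obtain ⟨root⟩ := hne
  -- for each v ≠ root choose a neighbor closer to root
  have key : ∀ v : V, v ≠ root → ∃ b : V, G.Adj v b ∧ G.dist b root < G.dist v root := by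
    intro v hv
    have hd : G.dist v root ≠ 0 := by
      have := hc.pos_dist_of_ne hv
      omega
    obtain ⟨p, hp⟩ := exists_walk_of_dist_ne_zero hd
    cases p with
    | nil => exact absurd rfl hv
    | cons h q =>
      refine ⟨_, h, ?_⟩
      have h1 : G.dist _ root ≤ q.length := dist_le q
      have h2 : q.length + 1 = G.dist v root := by simpa using hp
      omega
  choose b hb1 hb2 using key
  have hinj : Set.InjOn (fun v : V => if h : v = root then (0:ℕ) else 1) Set.univ → True := fun _ => trivial
  -- the map v ↦ s(v, b v)
  let f : V → Sym2 V := fun v => if h : v = root then s(v, v) else s(v, b v h)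
  have hmaps : ∀ v ∈ Finset.univ.erase root, f v ∈ G.edgeFinset := by
    intro v hv
    rw [Finset.mem_erase] at hv
    simp only [f, dif_neg hv.1]
    rw [mem_edgeFinset, mem_edgeSet]
    exact hb1 v hv.1
  have hinj2 : ∀ v ∈ Finset.univ.erase root, ∀ w ∈ Finset.univ.erase root, f v = f w → v = w := by
    intro v hv w hw h
    rw [Finset.mem_erase] at hv hw
    simp only [f, dif_neg hv.1, dif_neg hw.1, Sym2.eq_iff] at h
    rcases h with ⟨rfl, _⟩ | ⟨h1, h2⟩
    · rfl
    · exfalso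
      have h3 := hb2 v hv.1
      have h4 := hb2 w hw.1
      rw [← h1] at h4
      rw [h2] at h3
      omega
  have := Finset.card_le_card_of_injOn f hmaps hinj2
  have hcard : (Finset.univ.erase root).card = Fintype.card V - 1 := by
    simp [Finset.card_erase_of_mem]
  have : Fintype.card V - 1 ≤ G.edgeFinset.card := by omega
  have hpos : 0 < Fintype.card V := Fintype.card_pos_iff.mpr ⟨root⟩
  omega

lemma isTree_of_connected_of_card {G : SimpleGraph V} [Fintype G.edgeSet] (hc : G.Connected)
    (h : G.edgeFinset.card + 1 = Fintype.card V) : G.IsTree := by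
  classical
  refine ⟨hc, ?_⟩
  by_contra hcyc
  rw [IsAcyclic] at hcyc
  push_neg at hcyc
  obtain ⟨v, c, hcv⟩ := hcyc
  -- get an edge of the cycle
  obtain ⟨e, he⟩ : ∃ e, e ∈ c.edges := by
    cases c with
    | nil => exact absurd rfl hcv.ne_nil
    | cons h q => exact ⟨_, List.mem_cons_self⟩
  induction e with
  | h a b =>
  have hadj : G.Adj a b := c.adj_of_mem_edges he
  have hnb : ¬ G.IsBridge s(a,b) := by
    rw [isBridge_iff_adj_and_forall_cycle_notMem]
    push_neg
    exact ⟨v, c, hcv, he⟩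
    exact hadj
  rw [isBridge_iff] at hnb
  push_neg at hnb
  have hreach := hnb
  set G' := G \ fromEdgeSet {s(a,b)} with hG'
  have hle : G' ≤ G := sdiff_le
  have hconn' : G'.Connected := by
    rw [connected_iff]
    refine ⟨fun u w => ?_, hc.nonempty⟩
    obtain ⟨p⟩ := hc u w
    induction p with
    | nil => exact Reachable.refl _
    | @cons x y z hxy q ih =>
      refine Reachable.trans ?_ ih
      by_cases hxe : s(x,y) = s(a,b)
      · rw [Sym2.eq_iff] at hxe
        rcases hxe with ⟨rfl, rfl⟩ | ⟨rfl, rfl⟩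
        · exact hreach
        · exact hreach.symm
      · exact Adj.reachable (by simp [hG', hxy, hxe])
  have hedge : G'.edgeSet = G.edgeSet \ {s(a,b)} := by
    rw [hG', edgeSet_sdiff, edgeSet_fromEdgeSet, edgeSet_sdiff_sdiff_isDiag]
  have hcard' : G'.edgeFinset.card = G.edgeFinset.card - 1 := by
    have h1 : G'.edgeFinset = G.edgeFinset \ {s(a,b)} := by
      ext x
      simp [Set.mem_toFinset, hedge]
    rw [h1, Finset.card_sdiff_of_subset (by simp [hadj])]
    simp
  have hge := card_le_card_edge_of_connected hconn'
  have hpos : 0 < G.edgeFinset.card := by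
    rw [Finset.card_pos]
    exact ⟨s(a,b), by simp [hadj]⟩
  omega

end Gen


/-- vertex type -/
abbrev VT (n : ℕ) : Type := Fin (n+3) ⊕ Fin (n+1)

/-- embedding of vertices when inserting internal vertex at slot j -/
def emb {n : ℕ} (j : Fin (n+2)) : VT n → VT (n+1) := Sum.map Fin.castSucc j.succAbove

lemma emb_inj {n : ℕ} (j : Fin (n+2)) : Function.Injective (emb j) := by
  apply Sum.map_injective.mpr
  exact ⟨Fin.castSucc_injective _, Fin.succAbove_right_injective⟩

lemma emb_ne_w {n : ℕ} (j : Fin (n+2)) (u : VT n) : emb j u ≠ Sum.inr j := by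
  cases u with
  | inl i => simp [emb]
  | inr k => simp [emb, Fin.succAbove_ne]

lemma emb_ne_l {n : ℕ} (j : Fin (n+2)) (u : VT n) : emb j u ≠ Sum.inl (Fin.last (n+3)) := by
  cases u with
  | inl i => simp [emb, Fin.castSucc_lt_last i |>.ne]
  | inr k => simp [emb]

lemma w_ne_l {n : ℕ} (j : Fin (n+2)) : (Sum.inr j : VT (n+1)) ≠ Sum.inl (Fin.last (n+3)) := by
  simp

/-- trichotomy of vertices of the larger graph -/
lemma vt_cases {n : ℕ} (j : Fin (n+2)) (a : VT (n+1)) :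
    a = Sum.inr j ∨ a = Sum.inl (Fin.last (n+3)) ∨ ∃ u, a = emb j u := by
  cases a with
  | inl i =>
    rcases Fin.eq_castSucc_or_eq_last i with ⟨i', rfl⟩ | rfl
    · exact Or.inr (Or.inr ⟨Sum.inl i', rfl⟩)
    · exact Or.inr (Or.inl rfl)
  | inr k =>
    by_cases hk : k = j
    · exact Or.inl (by rw [hk])
    · obtain ⟨k', hk'⟩ := Fin.exists_succAbove_eq hk
      exact Or.inr (Or.inr ⟨Sum.inr k', by rw [emb]; simp [hk']⟩)

/-- the graph obtained by subdividing edge `e` with new internal vertex `j` and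
attaching the new leaf to it -/
def att {n : ℕ} (G : SimpleGraph (VT n)) (e : Sym2 (VT n)) (j : Fin (n+2)) :
    SimpleGraph (VT (n+1)) where
  Adj a b := (∃ u v, G.Adj u v ∧ s(u,v) ≠ e ∧ a = emb j u ∧ b = emb j v)
    ∨ (a = Sum.inr j ∧ ∃ u ∈ e, b = emb j u)
    ∨ (b = Sum.inr j ∧ ∃ u ∈ e, a = emb j u)
    ∨ (a = Sum.inr j ∧ b = Sum.inl (Fin.last (n+3)))
    ∨ (b = Sum.inr j ∧ a = Sum.inl (Fin.last (n+3)))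
  symm := by
    constructor
    rintro a b (⟨u, v, h1, h2, h3, h4⟩ | ⟨h1, u, h2, h3⟩ | ⟨h1, u, h2, h3⟩ | ⟨h1, h2⟩ | ⟨h1, h2⟩)
    · exact Or.inl ⟨v, u, h1.symm, by rwa [Sym2.eq_swap], h4, h3⟩
    · exact Or.inr (Or.inr (Or.inl ⟨h1, u, h2, h3⟩))
    · exact Or.inr (Or.inl ⟨h1, u, h2, h3⟩)
    · exact Or.inr <| Or.inr <| Or.inr <| Or.inr ⟨h1, h2⟩
    · exact Or.inr <| Or.inr <| Or.inr <| Or.inl ⟨h1, h2⟩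
  loopless := by
    constructor
    rintro a (⟨u, v, h1, h2, h3, h4⟩ | ⟨h1, u, h2, h3⟩ | ⟨h1, u, h2, h3⟩ | ⟨h1, h2⟩ | ⟨h1, h2⟩)
    · exact G.ne_of_adj h1 (emb_inj j (h3.symm.trans h4))
    · exact emb_ne_w j u (h3.symm.trans h1)
    · exact emb_ne_w j u (h3.symm.trans h1)
    · exact w_ne_l j (h1.symm.trans h2)
    · exact w_ne_l j (h1.symm.trans h2)

section AttAdj
variable {n : ℕ} {G : SimpleGraph (VT n)} {e : Sym2 (VT n)} {j : Fin (n+2)}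

lemma att_adj_emb {u v : VT n} :
    (att G e j).Adj (emb j u) (emb j v) ↔ G.Adj u v ∧ s(u,v) ≠ e := by
  constructor
  · rintro (⟨u', v', h1, h2, h3, h4⟩ | ⟨h1, _⟩ | ⟨h1, _⟩ | ⟨h1, _⟩ | ⟨h1, h2⟩)
    · obtain rfl := emb_inj j h3
      obtain rfl := emb_inj j h4
      exact ⟨h1, h2⟩
    · exact absurd h1 (emb_ne_w j u)
    · exact absurd h1 (emb_ne_w j v)
    · exact absurd h1 (emb_ne_w j u)
    · exact absurd h1 (emb_ne_w j v)
  · rintro ⟨h1, h2⟩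
    exact Or.inl ⟨u, v, h1, h2, rfl, rfl⟩

lemma att_adj_w_emb {u : VT n} :
    (att G e j).Adj (Sum.inr j) (emb j u) ↔ u ∈ e := by
  constructor
  · rintro (⟨u', v', h1, h2, h3, h4⟩ | ⟨h1, u', h2, h3⟩ | ⟨h1, _⟩ | ⟨h1, h2⟩ | ⟨h1, h2⟩)
    · exact absurd h3.symm (emb_ne_w j u')
    · obtain rfl := emb_inj j h3
      exact h2
    · exact absurd h1 (emb_ne_w j u)
    · exact absurd h2 (emb_ne_l j u)
    · exact absurd h1 (emb_ne_w j u)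
  · intro h
    exact Or.inr (Or.inl ⟨rfl, u, h, rfl⟩)

lemma att_adj_w_l : (att G e j).Adj (Sum.inr j) (Sum.inl (Fin.last (n+3))) := by
  exact Or.inr <| Or.inr <| Or.inr <| Or.inl ⟨rfl, rfl⟩

lemma att_adj_l_emb {u : VT n} :
    ¬ (att G e j).Adj (Sum.inl (Fin.last (n+3))) (emb j u) := by
  rintro (⟨u', v', h1, h2, h3, h4⟩ | ⟨h1, u', h2, h3⟩ | ⟨h1, u', h2, h3⟩ | ⟨h1, h2⟩ | ⟨h1, h2⟩)
  · exact emb_ne_l j u' h3.symm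
  · simp at h1
  · exact emb_ne_w j u h1
  · simp at h1
  · exact emb_ne_w j u h1

end AttAdj

section Att2
variable {n : ℕ} {G : SimpleGraph (VT n)} {e : Sym2 (VT n)} {j : Fin (n+2)}

lemma w_notmem_image {s : Set (VT n)} : (Sum.inr j : VT (n+1)) ∉ emb j '' s := by
  rintro ⟨u, _, hu⟩
  exact emb_ne_w j u hu

lemma att_nbr_l :
    (att G e j).neighborSet (Sum.inl (Fin.last (n+3))) = {Sum.inr j} := by
  ext a
  simp only [mem_neighborSet, Set.mem_singleton_iff]
  constructor
  · intro h
    rcases vt_cases j a with rfl | rfl | ⟨u, rfl⟩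
    · rfl
    · exact ((att G e j).irrefl h).elim
    · exact absurd h att_adj_l_emb
  · rintro rfl
    exact att_adj_w_l.symm

lemma att_nbr_w {x y : VT n} :
    (att G s(x,y) j).neighborSet (Sum.inr j)
      = {emb j x, emb j y, Sum.inl (Fin.last (n+3))} := by
  ext a
  simp only [mem_neighborSet, Set.mem_insert_iff, Set.mem_singleton_iff]
  constructor
  · intro h
    rcases vt_cases j a with rfl | rfl | ⟨u, rfl⟩
    · exact absurd rfl ((att G s(x,y) j).ne_of_adj h)
    · exact Or.inr (Or.inr rfl)
    · have := att_adj_w_emb.mp h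
      rw [Sym2.mem_iff] at this
      rcases this with rfl | rfl
      · exact Or.inl rfl
      · exact Or.inr (Or.inl rfl)
  · rintro (rfl | rfl | rfl)
    · exact att_adj_w_emb.mpr (Sym2.mem_mk_left x y)
    · exact att_adj_w_emb.mpr (Sym2.mem_mk_right x y)
    · exact att_adj_w_l

lemma att_nbr_emb_notmem {u : VT n} (hu : u ∉ e) :
    (att G e j).neighborSet (emb j u) = emb j '' (G.neighborSet u) := by
  ext a
  simp only [mem_neighborSet]
  constructor
  · intro h
    rcases vt_cases j a with rfl | rfl | ⟨v, rfl⟩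
    · exact (hu (att_adj_w_emb.mp h.symm)).elim
    · exact (att_adj_l_emb h.symm).elim
    · exact ⟨v, (att_adj_emb.mp h).1, rfl⟩
  · rintro ⟨v, hv, rfl⟩
    refine att_adj_emb.mpr ⟨hv, fun hc => hu ?_⟩
    rw [← hc]
    exact Sym2.mem_mk_left u v

lemma att_nbr_emb_left {x y : VT n} (hxy : G.Adj x y) :
    (att G s(x,y) j).neighborSet (emb j x)
      = insert (Sum.inr j) (emb j '' (G.neighborSet x \ {y})) := by
  ext a
  simp only [mem_neighborSet, Set.mem_insert_iff]
  constructor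
  · intro h
    rcases vt_cases j a with rfl | rfl | ⟨v, rfl⟩
    · exact Or.inl rfl
    · exact (att_adj_l_emb h.symm).elim
    · obtain ⟨h1, h2⟩ := att_adj_emb.mp h
      refine Or.inr ⟨v, ⟨h1, fun hc => ?_⟩, rfl⟩
      rw [Set.mem_singleton_iff] at hc
      exact h2 (by rw [hc])
  · rintro (rfl | ⟨v, ⟨h1, h2⟩, rfl⟩)
    · exact (att_adj_w_emb.mpr (Sym2.mem_mk_left x y)).symm
    · refine att_adj_emb.mpr ⟨h1, fun hc => h2 ?_⟩
      rw [Sym2.congr_right] at hc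
      exact hc ▸ rfl

lemma att_deg_emb (he : e ∈ G.edgeSet) (u : VT n) :
    ((att G e j).neighborSet (emb j u)).ncard = (G.neighborSet u).ncard := by
  induction e with
  | h x y =>
  by_cases hu : u ∈ s(x,y)
  · rw [Sym2.mem_iff] at hu
    rw [mem_edgeSet] at he
    rcases hu with rfl | rfl
    · rw [att_nbr_emb_left he, Set.ncard_insert_of_notMem w_notmem_image,
        Set.ncard_image_of_injective _ (emb_inj j),
        Set.ncard_diff_singleton_add_one (show y ∈ G.neighborSet u from he)]
    · rw [Sym2.eq_swap, att_nbr_emb_left he.symm,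
        Set.ncard_insert_of_notMem w_notmem_image,
        Set.ncard_image_of_injective _ (emb_inj j),
        Set.ncard_diff_singleton_add_one (show x ∈ G.neighborSet u from he.symm)]
  · rw [att_nbr_emb_notmem hu, Set.ncard_image_of_injective _ (emb_inj j)]

lemma att_conn (he : e ∈ G.edgeSet) (hc : G.Connected) : (att G e j).Connected := by
  have hstep : ∀ {a b : VT n} (_ : G.Walk a b),
      (att G e j).Reachable (emb j a) (Sum.inr j) →
      (att G e j).Reachable (emb j b) (Sum.inr j) := by
    intro a b p
    induction p with
    | nil => exact id
    | @cons a' b' c' hab q ih =>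
      intro hra
      by_cases hab' : s(a', b') = e
      · refine ih (((att_adj_w_emb (e := e)).mpr ?_).symm.reachable)
        rw [← hab']
        exact Sym2.mem_mk_right a' b'
      · exact ih (((att_adj_emb.mpr ⟨hab, hab'⟩).symm.reachable).trans hra)
  obtain ⟨x, hxe⟩ : ∃ x, x ∈ e := ⟨e.out.1, Sym2.out_fst_mem e⟩
  have hx : ∀ u : VT n, (att G e j).Reachable (emb j u) (Sum.inr j) := by
    intro u
    obtain ⟨p⟩ := hc x u
    exact hstep p ((att_adj_w_emb.mpr hxe).symm.reachable)
  have hall : ∀ a : VT (n+1), (att G e j).Reachable a (Sum.inr j) := by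
    intro a
    rcases vt_cases j a with rfl | rfl | ⟨u, rfl⟩
    · exact Reachable.refl _
    · exact att_adj_w_l.symm.reachable
    · exact hx u
  rw [connected_iff]
  exact ⟨fun a b => (hall a).trans (hall b).symm, ⟨Sum.inr j⟩⟩

lemma w_notmem_sym2_image {ε : Sym2 (VT n)} :
    (Sum.inr j : VT (n+1)) ∉ Sym2.map (emb j) ε := by
  rw [Sym2.mem_map]
  rintro ⟨u, _, hu⟩
  exact emb_ne_w j u hu

lemma att_edgeSet {x y : VT n} :
    (att G s(x,y) j).edgeSet
      = Sym2.map (emb j) '' (G.edgeSet \ {s(x,y)})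
        ∪ {s(Sum.inr j, emb j x), s(Sum.inr j, emb j y),
            s(Sum.inr j, Sum.inl (Fin.last (n+3)))} := by
  ext ε
  induction ε with
  | h a b =>
  rw [mem_edgeSet]
  constructor
  · rintro (⟨u, v, h1, h2, h3, h4⟩ | ⟨h1, u, h2, h3⟩ | ⟨h1, u, h2, h3⟩ | ⟨h1, h2⟩ | ⟨h1, h2⟩)
    · subst h3; subst h4
      exact Or.inl ⟨s(u,v), ⟨h1, h2⟩, by rw [Sym2.map_pair_eq]⟩
    · subst h1; subst h3
      rw [Sym2.mem_iff] at h2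
      rcases h2 with rfl | rfl
      · exact Or.inr (by simp)
      · exact Or.inr (by simp)
    · subst h1; subst h3
      rw [Sym2.mem_iff] at h2
      rcases h2 with rfl | rfl
      · refine Or.inr (by rw [Sym2.eq_swap]; simp)
      · refine Or.inr (by rw [Sym2.eq_swap]; simp)
    · subst h1; subst h2
      exact Or.inr (by simp)
    · subst h1; subst h2
      refine Or.inr (by rw [Sym2.eq_swap]; simp)
  · rintro (⟨ε', ⟨hmem, hne⟩, hmap⟩ | h)
    · induction ε' with
      | h u v =>
      rw [Sym2.map_pair_eq] at hmap
      rw [Sym2.eq_iff] at hmap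
      rw [mem_edgeSet] at hmem
      rcases hmap with ⟨rfl, rfl⟩ | ⟨rfl, rfl⟩
      · exact Or.inl ⟨u, v, hmem, hne, rfl, rfl⟩
      · exact Or.inl ⟨v, u, hmem.symm, by rwa [Sym2.eq_swap], rfl, rfl⟩
    · simp only [Set.mem_insert_iff, Set.mem_singleton_iff, Sym2.eq_iff] at h
      rcases h with (⟨rfl, rfl⟩|⟨rfl,rfl⟩) | (⟨rfl, rfl⟩|⟨rfl,rfl⟩) | (⟨rfl, rfl⟩|⟨rfl,rfl⟩)
      · exact Or.inr (Or.inl ⟨rfl, x, Sym2.mem_mk_left x y, rfl⟩)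
      · exact Or.inr (Or.inr (Or.inl ⟨rfl, x, Sym2.mem_mk_left x y, rfl⟩))
      · exact Or.inr (Or.inl ⟨rfl, y, Sym2.mem_mk_right x y, rfl⟩)
      · exact Or.inr (Or.inr (Or.inl ⟨rfl, y, Sym2.mem_mk_right x y, rfl⟩))
      · exact Or.inr (Or.inr (Or.inr (Or.inl ⟨rfl, rfl⟩)))
      · exact Or.inr (Or.inr (Or.inr (Or.inr ⟨rfl, rfl⟩)))

end Att2

section Att3
variable {n : ℕ} {G : SimpleGraph (VT n)} {e : Sym2 (VT n)} {j : Fin (n+2)}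

lemma att_card_edge {x y : VT n} (he : G.Adj x y) :
    ((att G s(x,y) j).edgeSet).ncard = G.edgeSet.ncard + 2 := by
  have hxy : x ≠ y := G.ne_of_adj he
  have hexy : emb j x ≠ emb j y := fun h => hxy (emb_inj j h)
  rw [att_edgeSet, Set.ncard_union_eq]
  · rw [Set.ncard_image_of_injective _ (Sym2.map.injective (emb_inj j))]
    have h1 : (G.edgeSet \ {s(x,y)}).ncard + 1 = G.edgeSet.ncard :=
      Set.ncard_diff_singleton_add_one ((G.mem_edgeSet).mpr he)
    have h2 : ({s(Sum.inr j, emb j x), s(Sum.inr j, emb j y),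
        s(Sum.inr j, Sum.inl (Fin.last (n+3)))} : Set (Sym2 (VT (n+1)))).ncard = 3 := by
      rw [Set.ncard_insert_of_notMem, Set.ncard_insert_of_notMem, Set.ncard_singleton]
      · rw [Set.mem_singleton_iff]
        intro h
        rcases Sym2.eq_iff.mp h with ⟨-, h2⟩ | ⟨h1, -⟩
        · exact emb_ne_l j y h2
        · exact w_ne_l j h1
      · rw [Set.mem_insert_iff, Set.mem_singleton_iff]
        rintro (h | h)
        · rcases Sym2.eq_iff.mp h with ⟨-, h2⟩ | ⟨h1, -⟩
          · exact hexy h2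
          · exact emb_ne_w j y h1.symm
        · rcases Sym2.eq_iff.mp h with ⟨-, h2⟩ | ⟨h1, -⟩
          · exact emb_ne_l j x h2
          · exact w_ne_l j h1
    omega
  · rw [Set.disjoint_right]
    rintro ε hε ⟨ε', -, hmap⟩
    simp only [Set.mem_insert_iff, Set.mem_singleton_iff] at hε
    have : (Sum.inr j : VT (n+1)) ∈ Sym2.map (emb j) ε' := by
      rw [hmap]
      rcases hε with rfl | rfl | rfl <;> simp
    exact w_notmem_sym2_image this

/-- the defining predicate of `LeafLabeledTrivalentTree (m+3)` -/
def goodP {m : ℕ} (G : SimpleGraph (VT m)) : Prop :=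
  G.IsTree ∧ (∀ i : Fin (m+3), (G.neighborSet (Sum.inl i)).ncard = 1) ∧
    (∀ k : Fin (m+1), (G.neighborSet (Sum.inr k)).ncard = 3)

lemma card_VT (m : ℕ) : Fintype.card (VT m) = 2*m + 4 := by
  simp only [Fintype.card_sum, Fintype.card_fin]
  omega

lemma edgeFinset_card_eq_ncard {V : Type*} [Fintype V] (G : SimpleGraph V)
    [Fintype G.edgeSet] : G.edgeFinset.card = G.edgeSet.ncard := by
  rw [Set.ncard_eq_toFinset_card']
  rfl

lemma goodP_card_edge {m : ℕ} {G : SimpleGraph (VT m)} (hG : goodP G) :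
    G.edgeSet.ncard = 2*m + 3 := by
  classical
  have := hG.1.card_edgeFinset (G := G)
  rw [card_VT, edgeFinset_card_eq_ncard] at this
  omega

lemma att_good (hG : goodP G) (he : e ∈ G.edgeSet) : goodP (att G e j) := by
  classical
  obtain ⟨htree, hleaf, hint⟩ := hG
  refine ⟨?_, ?_, ?_⟩
  · apply isTree_of_connected_of_card (att_conn he htree.isConnected)
    rw [card_VT, edgeFinset_card_eq_ncard]
    induction e with
    | h x y =>
    rw [att_card_edge (by rwa [← mem_edgeSet]), goodP_card_edge ⟨htree, hleaf, hint⟩]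
    omega
  · intro i
    rcases Fin.eq_castSucc_or_eq_last i with ⟨i', rfl⟩ | rfl
    · have : (Sum.inl i'.castSucc : VT (n+1)) = emb j (Sum.inl i') := rfl
      rw [this, att_deg_emb he]
      exact hleaf i'
    · rw [att_nbr_l, Set.ncard_singleton]
  · intro k
    by_cases hk : k = j
    · subst hk
      induction e with
      | h x y =>
      rw [mem_edgeSet] at he
      rw [att_nbr_w]
      rw [Set.ncard_insert_of_notMem, Set.ncard_insert_of_notMem, Set.ncard_singleton]
      · rw [Set.mem_singleton_iff]
        exact emb_ne_l _ y
      · rw [Set.mem_insert_iff, Set.mem_singleton_iff]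
        rintro (h | h)
        · exact (G.ne_of_adj he) (emb_inj _ h)
        · exact emb_ne_l _ x h
    · obtain ⟨k', rfl⟩ := Fin.exists_succAbove_eq hk
      have : (Sum.inr (j.succAbove k') : VT (n+1)) = emb j (Sum.inr k') := rfl
      rw [this, att_deg_emb he]
      exact hint k'

end Att3

section Att4
variable {n : ℕ}

lemma att_inj {G G' : SimpleGraph (VT n)} {e e' : Sym2 (VT n)} {j j' : Fin (n+2)}
    (he : e ∈ G.edgeSet) (he' : e' ∈ G'.edgeSet)
    (h : att G e j = att G' e' j') : j = j' ∧ e = e' ∧ G = G' := by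
  have hj : j = j' := by
    have h1 : ({Sum.inr j} : Set (VT (n+1))) = {Sum.inr j'} := by
      rw [← att_nbr_l (G := G) (e := e), h, att_nbr_l]
    have := h1 ▸ Set.mem_singleton (Sum.inr j : VT (n+1))
    simpa using this
  subst hj
  have hee : e = e' := by
    apply Sym2.ext
    intro u
    rw [← att_adj_w_emb (G := G) (j := j), h, att_adj_w_emb]
  subst hee
  refine ⟨rfl, rfl, ?_⟩
  ext u v
  constructor
  · intro huv
    by_cases hc : s(u,v) = e
    · rw [← mem_edgeSet]
      rw [hc]
      exact he'
    · have := (att_adj_emb (G := G) (e := e) (j := j)).mpr ⟨huv, hc⟩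
      rw [h] at this
      exact (att_adj_emb.mp this).1
  · intro huv
    by_cases hc : s(u,v) = e
    · rw [← mem_edgeSet, hc]
      exact he
    · have := (att_adj_emb (G := G') (e := e) (j := j)).mpr ⟨huv, hc⟩
      rw [← h] at this
      exact (att_adj_emb.mp this).1

lemma walk_mem_closed {V : Type*} {G : SimpleGraph V} {S : Set V}
    (hS : ∀ a ∈ S, ∀ b, G.Adj a b → b ∈ S) {u v : V} (p : G.Walk u v) (hu : u ∈ S) :
    v ∈ S := by
  induction p with
  | nil => exact hu
  | cons h q ih => exact ih (hS _ hu _ h)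

/-- deletion of the last leaf and its neighbor `j`, merging through `s(p,q)` -/
def det (H : SimpleGraph (VT (n+1))) (j : Fin (n+2)) (p q : VT n) :
    SimpleGraph (VT n) where
  Adj u v := H.Adj (emb j u) (emb j v) ∨ (u ≠ v ∧ s(u,v) = s(p,q))
  symm := by
    constructor
    rintro u v (h | ⟨h1, h2⟩)
    · exact Or.inl h.symm
    · exact Or.inr ⟨h1.symm, by rwa [Sym2.eq_swap]⟩
  loopless := by
    constructor
    rintro u (h | ⟨h1, h2⟩)
    · exact H.irrefl h
    · exact h1 rfl

lemma detach_exists {H : SimpleGraph (VT (n+1))} (hH : goodP H) :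
    ∃ (G : SimpleGraph (VT n)) (e : Sym2 (VT n)) (j : Fin (n+2)),
      goodP G ∧ e ∈ G.edgeSet ∧ att G e j = H := by
  classical
  obtain ⟨htree, hleaf, hint⟩ := hH
  set l : VT (n+1) := Sum.inl (Fin.last (n+3)) with hl
  -- the unique neighbor of the last leaf
  obtain ⟨w0, hw0⟩ := Set.ncard_eq_one.mp (hleaf (Fin.last (n+3)))
  have hadjw0 : H.Adj l w0 := by
    have : w0 ∈ H.neighborSet l := by rw [hw0]; exact rfl
    exact this
  -- w0 is an internal vertex
  obtain ⟨j, rfl⟩ : ∃ j : Fin (n+2), w0 = Sum.inr j := by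
    cases w0 with
    | inr j => exact ⟨j, rfl⟩
    | inl i =>
      exfalso
      have hNi : H.neighborSet (Sum.inl i) = {l} := by
        obtain ⟨z, hz⟩ := Set.ncard_eq_one.mp (hleaf i)
        have : l ∈ H.neighborSet (Sum.inl i) := hadjw0.symm
        rw [hz] at this ⊢
        rw [Set.mem_singleton_iff] at this
        rw [this]
      have hclosed : ∀ a ∈ ({l, Sum.inl i} : Set (VT (n+1))), ∀ b, H.Adj a b →
          b ∈ ({l, Sum.inl i} : Set (VT (n+1))) := by
        rintro a (rfl | rfl) b hab
        · have : b ∈ H.neighborSet l := hab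
          rw [hw0] at this
          exact Or.inr this
        · have : b ∈ H.neighborSet (Sum.inl i) := hab
          rw [hNi] at this
          exact Or.inl this
      obtain ⟨p⟩ := htree.isConnected l (Sum.inr 0)
      have := walk_mem_closed hclosed p (Or.inl rfl)
      rcases this with h | h <;> simp [hl] at h
  -- the two other neighbors of the internal vertex
  have hlmem : l ∈ H.neighborSet (Sum.inr j) := hadjw0.symm
  have h2 : (H.neighborSet (Sum.inr j) \ {l}).ncard = 2 := by
    have := Set.ncard_diff_singleton_add_one hlmem (Set.toFinite _)
    rw [hint j] at this
    omega
  obtain ⟨x, y, hxy, hset⟩ := Set.ncard_eq_two.mp h2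
  have hx : x ∈ H.neighborSet (Sum.inr j) \ {l} := by rw [hset]; exact Or.inl rfl
  have hy : y ∈ H.neighborSet (Sum.inr j) \ {l} := by rw [hset]; exact Or.inr rfl
  have hadjx : H.Adj (Sum.inr j) x := hx.1
  have hadjy : H.Adj (Sum.inr j) y := hy.1
  have hxl : x ≠ l := hx.2
  have hyl : y ≠ l := hy.2
  obtain ⟨p, rfl⟩ : ∃ p, x = emb j p := by
    rcases vt_cases j x with rfl | rfl | ⟨p, rfl⟩
    · exact absurd rfl (H.ne_of_adj hadjx)
    · exact absurd rfl hxl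
    · exact ⟨p, rfl⟩
  obtain ⟨q, rfl⟩ : ∃ q, y = emb j q := by
    rcases vt_cases j y with rfl | rfl | ⟨q, rfl⟩
    · exact absurd rfl (H.ne_of_adj hadjy)
    · exact absurd rfl hyl
    · exact ⟨q, rfl⟩
  have hpq : p ≠ q := fun h => hxy (by rw [h])
  -- the full neighbor sets
  have hNw : H.neighborSet (Sum.inr j) = {emb j p, emb j q, l} := by
    ext a
    simp only [Set.mem_insert_iff, Set.mem_singleton_iff, mem_neighborSet]
    constructor
    · intro ha
      by_cases hal : a = l
      · exact Or.inr (Or.inr hal)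
      · have hmem2 : a ∈ H.neighborSet (Sum.inr j) \ {l} := ⟨ha, hal⟩
        rw [hset] at hmem2
        simp only [Set.mem_insert_iff, Set.mem_singleton_iff] at hmem2
        rcases hmem2 with h | h
        · exact Or.inl h
        · exact Or.inr (Or.inl h)
    · rintro (rfl | rfl | rfl)
      · exact hadjx
      · exact hadjy
      · exact hadjw0.symm
  have hNl : H.neighborSet l = {Sum.inr j} := hw0
  -- p and q are not adjacent in H
  have hnxy : ¬ H.Adj (emb j p) (emb j q) := by
    intro hadj
    have hc : (Walk.cons hadjx (Walk.cons hadj (Walk.cons hadjy.symm Walk.nil))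
        : H.Walk (Sum.inr j) (Sum.inr j)).IsCycle := by
      have d1 : emb j p ≠ emb j q := fun h => hpq (emb_inj j h)
      have d2 : (Sum.inr j : VT (n+1)) ≠ emb j p := fun h => emb_ne_w j p h.symm
      have d3 : (Sum.inr j : VT (n+1)) ≠ emb j q := fun h => emb_ne_w j q h.symm
      simp [Walk.isCycle_def, Walk.isTrail_def, Sym2.eq_iff, d1, d2, d3, d1.symm,
        d2.symm, d3.symm] <;> tauto
    exact htree.IsAcyclic _ hc
  -- the deleted graph
  set D := det H j p q with hD
  have hDadj : D.Adj p q := Or.inr ⟨hpq, rfl⟩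
  have heD : s(p,q) ∈ D.edgeSet := hDadj
  -- H is the attachment
  have hatt : att D s(p,q) j = H := by
    have c1 : ∀ u v : VT n, (att D s(p,q) j).Adj (emb j u) (emb j v) ↔
        H.Adj (emb j u) (emb j v) := by
      intro u v
      rw [att_adj_emb]
      constructor
      · rintro ⟨hD1 | ⟨h1, h2⟩, hne⟩
        · exact hD1
        · exact absurd h2 hne
      · intro hH1
        refine ⟨Or.inl hH1, fun hc => ?_⟩
        rw [Sym2.eq_iff] at hc
        rcases hc with ⟨rfl, rfl⟩ | ⟨rfl, rfl⟩
        · exact hnxy hH1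
        · exact hnxy hH1.symm
    have c2 : ∀ u : VT n, (att D s(p,q) j).Adj (Sum.inr j) (emb j u) ↔
        H.Adj (Sum.inr j) (emb j u) := by
      intro u
      rw [att_adj_w_emb, Sym2.mem_iff]
      constructor
      · rintro (rfl | rfl)
        · exact hadjx
        · exact hadjy
      · intro hH1
        have : emb j u ∈ H.neighborSet (Sum.inr j) := hH1
        rw [hNw] at this
        rcases this with h | h | h
        · exact Or.inl (emb_inj j h)
        · exact Or.inr (emb_inj j h)
        · exact absurd h (emb_ne_l j u)
    have c4 : ∀ u : VT n, ¬ H.Adj l (emb j u) := by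
      intro u hadj
      have : emb j u ∈ H.neighborSet l := hadj
      rw [hNl] at this
      exact emb_ne_w j u this
    ext a b
    rcases vt_cases j a with rfl | rfl | ⟨u, rfl⟩ <;>
      rcases vt_cases j b with rfl | rfl | ⟨v, rfl⟩
    · exact iff_of_false ((att D s(p,q) j).irrefl) (H.irrefl)
    · exact iff_of_true att_adj_w_l hadjw0.symm
    · exact c2 v
    · exact iff_of_true att_adj_w_l.symm hadjw0
    · exact iff_of_false ((att D s(p,q) j).irrefl) (H.irrefl)
    · exact iff_of_false att_adj_l_emb (c4 v)
    · rw [adj_comm, (H.adj_comm _ _)]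
      exact c2 u
    · rw [adj_comm, (H.adj_comm _ _)]
      exact iff_of_false att_adj_l_emb (c4 u)
    · exact c1 u v
  -- D is good
  refine ⟨D, s(p,q), j, ⟨?_, ?_, ?_⟩, heD, hatt⟩
  · -- D is a tree
    apply isTree_of_connected_of_card
    · -- connectivity via the retraction g
      set g : VT (n+1) → VT n := fun a =>
        if h : ∃ u, a = emb j u then h.choose else p with hgdef
      have hg : ∀ u, g (emb j u) = u := by
        intro u
        have hex : ∃ u', emb j u = emb j u' := ⟨u, rfl⟩
        rw [hgdef]
        simp only []
        rw [dif_pos hex]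
        exact (emb_inj j hex.choose_spec).symm
      have hgw : g (Sum.inr j) = p := by
        have hne : ¬ ∃ u, (Sum.inr j : VT (n+1)) = emb j u := by
          rintro ⟨u, hu⟩
          exact emb_ne_w j u hu.symm
        rw [hgdef]
        simp only []
        rw [dif_neg hne]
      have hgl : g l = p := by
        have hne : ¬ ∃ u, l = emb j u := by
          rintro ⟨u, hu⟩
          exact emb_ne_l j u hu.symm
        rw [hgdef]
        simp only []
        rw [dif_neg hne]
      have hadjstep : ∀ a b : VT (n+1), H.Adj a b → D.Reachable (g a) (g b) := by
        intro a b hab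
        rcases vt_cases j a with rfl | rfl | ⟨u, rfl⟩ <;>
          rcases vt_cases j b with rfl | rfl | ⟨v, rfl⟩
        · exact absurd hab (H.irrefl)
        · rw [hgw, hgl]
        · rw [hgw, hg]
          have : emb j v ∈ H.neighborSet (Sum.inr j) := hab
          rw [hNw] at this
          rcases this with h | h | h
          · obtain rfl := emb_inj j h
            exact Reachable.refl _
          · obtain rfl := emb_inj j h
            exact hDadj.reachable
          · exact absurd h (emb_ne_l j v)
        · rw [hgl, hgw]
        · exact absurd hab (H.irrefl)
        · exfalso
          have : emb j v ∈ H.neighborSet l := hab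
          rw [hNl] at this
          exact emb_ne_w j v this
        · rw [hgw, hg]
          have : emb j u ∈ H.neighborSet (Sum.inr j) := hab.symm
          rw [hNw] at this
          rcases this with h | h | h
          · obtain rfl := emb_inj j h
            exact Reachable.refl _
          · obtain rfl := emb_inj j h
            exact hDadj.symm.reachable
          · exact absurd h (emb_ne_l j u)
        · exfalso
          have : emb j u ∈ H.neighborSet l := hab.symm
          rw [hNl] at this
          exact emb_ne_w j u this
        · rw [hg, hg]
          exact Adj.reachable (show D.Adj u v from Or.inl hab)
      have hreach : ∀ a b : VT (n+1), H.Reachable a b → D.Reachable (g a) (g b) := by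
        intro a b hr
        obtain ⟨pw⟩ := hr
        induction pw with
        | nil => exact Reachable.refl _
        | cons h q ih => exact (hadjstep _ _ h).trans ih
      rw [connected_iff]
      refine ⟨fun u v => ?_, ⟨p⟩⟩
      have := hreach (emb j u) (emb j v) (htree.isConnected (emb j u) (emb j v))
      rwa [hg, hg] at this
    · -- edge count
      classical
      rw [card_VT, edgeFinset_card_eq_ncard]
      have hcnt : (att D s(p,q) j).edgeSet.ncard = D.edgeSet.ncard + 2 :=
        att_card_edge hDadj
      rw [hatt] at hcnt
      have := goodP_card_edge (G := H) ⟨htree, hleaf, hint⟩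
      omega
  · -- leaf degrees
    intro i
    have hde := att_deg_emb (G := D) (j := j) heD (Sum.inl i)
    rw [hatt] at hde
    rw [← hde]
    exact hleaf i.castSucc
  · -- internal degrees
    intro k
    have hde := att_deg_emb (G := D) (j := j) heD (Sum.inr k)
    rw [hatt] at hde
    rw [← hde]
    exact hint (j.succAbove k)

end Att4

section Count
/-- the type of good graphs -/
abbrev TT (n : ℕ) : Type := {G : SimpleGraph (VT n) // goodP G}

noncomputable instance (n : ℕ) : Fintype (TT n) := Fintype.ofFinite _

lemma nat_card_sigma_const {ι : Type*} [Finite ι] {f : ι → Type*} [∀ i, Finite (f i)]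
    {c : ℕ} (h : ∀ i, Nat.card (f i) = c) : Nat.card (Σ i, f i) = Nat.card ι * c := by
  classical
  letI := Fintype.ofFinite ι
  letI : ∀ i, Fintype (f i) := fun i => Fintype.ofFinite _
  rw [Nat.card_eq_fintype_card, Fintype.card_sigma, Nat.card_eq_fintype_card]
  rw [Finset.sum_congr rfl (fun i _ => by rw [← Nat.card_eq_fintype_card, h i])]
  simp [Finset.sum_const, mul_comm, Finset.card_univ]

/-- the attachment bijection -/
noncomputable def attachFun (n : ℕ) :
    (Σ G : TT n, G.1.edgeSet × Fin (n+2)) → TT (n+1) :=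
  fun x => ⟨att x.1.1 x.2.1.1 x.2.2, att_good x.1.2 x.2.1.2⟩

lemma attachFun_bij (n : ℕ) : Function.Bijective (attachFun n) := by
  constructor
  · rintro ⟨⟨G, hG⟩, ⟨e, he⟩, j⟩ ⟨⟨G', hG'⟩, ⟨e', he'⟩, j'⟩ h
    have h2 : att G e j = att G' e' j' := congrArg Subtype.val h
    obtain ⟨rfl, rfl, rfl⟩ := att_inj he he' h2
    rfl
  · rintro ⟨H, hH⟩
    obtain ⟨G, e, j, hG, he, hatt⟩ := detach_exists hH
    exact ⟨⟨⟨G, hG⟩, ⟨e, he⟩, j⟩, Subtype.ext hatt⟩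

lemma card_TT_succ (n : ℕ) :
    Nat.card (TT (n+1)) = Nat.card (TT n) * ((2*n+3) * (n+2)) := by
  rw [← Nat.card_eq_of_bijective _ (attachFun_bij n)]
  apply nat_card_sigma_const
  rintro ⟨G, hG⟩
  rw [Nat.card_prod, Nat.card_coe_set_eq, goodP_card_edge hG, Nat.card_eq_fintype_card,
    Fintype.card_fin]

/-- the star graph on 4 vertices -/
def star0 : SimpleGraph (VT 0) where
  Adj a b := a ≠ b ∧ (a = Sum.inr 0 ∨ b = Sum.inr 0)
  symm := by constructor; rintro a b ⟨h1, h2 | h2⟩ <;> exact ⟨h1.symm, by tauto⟩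
  loopless := by constructor; rintro a ⟨h1, -⟩; exact h1 rfl

lemma goodP_unique {G : SimpleGraph (VT 0)} (hG : goodP G) : G = star0 := by
  obtain ⟨htree, hleaf, hint⟩ := hG
  -- the center is adjacent to everything else
  have hNw : G.neighborSet (Sum.inr 0) = {v | v ≠ Sum.inr 0} := by
    apply Set.eq_of_subset_of_ncard_le
    · intro a ha
      exact fun h => G.ne_of_adj ha h.symm
    · have : ({v | v ≠ (Sum.inr 0 : VT 0)}).ncard = 3 := by
        rw [Set.ncard_eq_toFinset_card']
        decide
      rw [this, hint 0]
    · exact Set.toFinite _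
  have hadjw : ∀ a : VT 0, a ≠ Sum.inr 0 → G.Adj (Sum.inr 0) a := by
    intro a ha
    have : a ∈ G.neighborSet (Sum.inr 0) := by rw [hNw]; exact ha
    exact this
  have hNl : ∀ i : Fin 3, G.neighborSet (Sum.inl i) = {Sum.inr 0} := by
    intro i
    obtain ⟨z, hz⟩ := Set.ncard_eq_one.mp (hleaf i)
    have hw : (Sum.inr 0 : VT 0) ∈ G.neighborSet (Sum.inl i) := (hadjw _ (by simp)).symm
    rw [hz] at hw ⊢
    rw [Set.mem_singleton_iff] at hw
    rw [hw]
  ext a b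
  constructor
  · intro hab
    refine ⟨G.ne_of_adj hab, ?_⟩
    by_contra hc
    push_neg at hc
    obtain ⟨ha, hb⟩ := hc
    cases a with
    | inr k => exact ha (by rw [Fin.fin_one_eq_zero k])
    | inl i =>
      have : b ∈ G.neighborSet (Sum.inl i) := hab
      rw [hNl i] at this
      exact hb this
  · rintro ⟨h1, rfl | rfl⟩
    · exact hadjw b h1.symm
    · exact (hadjw a h1).symm
instance : DecidableRel star0.Adj :=
  fun a b => decidable_of_iff (a ≠ b ∧ (a = Sum.inr 0 ∨ b = Sum.inr 0)) Iff.rfl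

lemma goodP_star0 : goodP star0 := by
  refine ⟨?_, ?_, ?_⟩
  · apply isTree_of_connected_of_card
    · rw [connected_iff]
      refine ⟨fun a b => ?_, ⟨Sum.inr 0⟩⟩
      have key : ∀ c : VT 0, star0.Reachable c (Sum.inr 0) := by
        intro c
        by_cases hc : c = Sum.inr 0
        · rw [hc]
        · exact (show star0.Adj c (Sum.inr 0) from ⟨hc, Or.inr rfl⟩).reachable
      exact (key a).trans (key b).symm
    · decide
  · intro i
    have : star0.neighborSet (Sum.inl i) = {Sum.inr 0} := by
      ext a
      simp only [mem_neighborSet, Set.mem_singleton_iff]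
      constructor
      · rintro ⟨h1, h2 | h2⟩
        · simp at h2
        · exact h2
      · rintro rfl
        exact ⟨by simp, Or.inr rfl⟩
    rw [this, Set.ncard_singleton]
  · intro k
    have hk : k = 0 := Fin.fin_one_eq_zero k
    subst hk
    have : star0.neighborSet (Sum.inr 0) = {v | v ≠ Sum.inr 0} := by
      ext a
      simp only [mem_neighborSet, Set.mem_setOf_eq]
      constructor
      · rintro ⟨h1, -⟩
        exact fun h => h1 h.symm
      · intro h
        exact ⟨fun h' => h h'.symm, Or.inl rfl⟩
    rw [this]
    rw [Set.ncard_eq_toFinset_card']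
    decide

lemma card_TT_zero : Nat.card (TT 0) = 1 := by
  rw [Nat.card_eq_one_iff_unique]
  constructor
  · constructor
    intro a b
    exact Subtype.ext ((goodP_unique a.2).trans (goodP_unique b.2).symm)
  · exact ⟨⟨star0, goodP_star0⟩⟩

lemma card_TT (n : ℕ) :
    Nat.card (TT n) = Nat.doubleFactorial (2*n+1) * Nat.factorial (n+1) := by
  induction n with
  | zero => rw [card_TT_zero]; decide
  | succ m ih =>
    rw [card_TT_succ, ih]
    have h1 : 2*(m+1)+1 = (2*m+1)+2 := by omega
    rw [h1, Nat.doubleFactorial_add_two, Nat.factorial_succ (m+1)]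
    ring

end Count

section Rigid

lemma rigid : ∀ (n : ℕ) (G : SimpleGraph (VT n)), goodP G → ∀ φ : G ≃g G,
    (∀ i, φ (Sum.inl i) = Sum.inl i) → ∀ v, φ v = v := by
  intro n
  induction n with
  | zero =>
    intro G _ φ hfix v
    cases v with
    | inl i => exact hfix i
    | inr k =>
      rw [Fin.fin_one_eq_zero k]
      rcases hk : φ (Sum.inr 0) with i | k'
      · exfalso
        have := φ.injective ((hfix i).trans hk.symm)
        simp at this
      · rw [Fin.fin_one_eq_zero k']
  | succ m ih =>
    intro G hG φ hfix v
    obtain ⟨D, e, j, hD, he, hatt⟩ := detach_exists hG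
    subst hatt
    set l : VT (m+1) := Sum.inl (Fin.last (m+3)) with hldef
    have hl : φ l = l := hfix (Fin.last (m+3))
    have hw : φ (Sum.inr j) = Sum.inr j := by
      have h1 : (att D e j).Adj (φ (Sum.inr j)) l := by
        rw [← hl]
        exact φ.map_adj_iff.mpr att_adj_w_l
      have h2 : φ (Sum.inr j) ∈ (att D e j).neighborSet l := h1.symm
      rw [att_nbr_l] at h2
      exact h2
    have hw' : φ.symm (Sum.inr j) = Sum.inr j := by
      conv_lhs => rw [← hw]
      exact φ.symm_apply_apply _
    have hl' : φ.symm l = l := by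
      conv_lhs => rw [← hl]
      exact φ.symm_apply_apply _
    have hψ : ∀ u : VT m, ∃ v, φ (emb j u) = emb j v := by
      intro u
      rcases vt_cases j (φ (emb j u)) with hh | hh | ⟨v, hv⟩
      · exact absurd (φ.injective (hh.trans hw.symm)) (emb_ne_w j u)
      · exact absurd (φ.injective (hh.trans hl.symm)) (emb_ne_l j u)
      · exact ⟨v, hv⟩
    choose ψ hψe using hψ
    have hψ' : ∀ u : VT m, ∃ v, φ.symm (emb j u) = emb j v := by
      intro u
      rcases vt_cases j (φ.symm (emb j u)) with hh | hh | ⟨v, hv⟩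
      · exact absurd (φ.symm.injective (hh.trans hw'.symm)) (emb_ne_w j u)
      · exact absurd (φ.symm.injective (hh.trans hl'.symm)) (emb_ne_l j u)
      · exact ⟨v, hv⟩
    choose ψ' hψ'e using hψ'
    have hli : ∀ u, ψ' (ψ u) = u := by
      intro u
      apply emb_inj j
      rw [← hψ'e, ← hψe, φ.symm_apply_apply]
    have hri : ∀ u, ψ (ψ' u) = u := by
      intro u
      apply emb_inj j
      rw [← hψe, ← hψ'e, φ.apply_symm_apply]
    have hmem : ∀ u, u ∈ e → ψ u ∈ e := by
      intro u hu
      have h1 : (att D e j).Adj (Sum.inr j) (emb j u) := att_adj_w_emb.mpr hu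
      have h2 := φ.map_adj_iff.mpr h1
      rw [hw, hψe] at h2
      exact att_adj_w_emb.mp h2
    have hmem' : ∀ u, u ∈ e → ψ' u ∈ e := by
      intro u hu
      have h1 : (att D e j).Adj (Sum.inr j) (emb j u) := att_adj_w_emb.mpr hu
      have h2 := φ.symm.map_adj_iff.mpr h1
      rw [hw', hψ'e] at h2
      exact att_adj_w_emb.mp h2
    have hψinj : Function.Injective ψ := fun a b h => by
      rw [← hli a, ← hli b, h]
    have hfwd : ∀ {ρ : VT m → VT m}, (∀ u, u ∈ e → ρ u ∈ e) → Function.Injective ρ →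
        (∀ u v, D.Adj u v → (att D e j).Adj (emb j (ρ u)) (emb j (ρ v)) ∨ s(u,v) = e) →
        ∀ u v, D.Adj u v → D.Adj (ρ u) (ρ v) := by
      intro ρ hρmem hρinj hρadj u v huv
      by_cases hc : s(u,v) = e
      · have hu : u ∈ e := by rw [← hc]; exact Sym2.mem_mk_left u v
        have hv : v ∈ e := by rw [← hc]; exact Sym2.mem_mk_right u v
        have hne : ρ u ≠ ρ v := fun h => D.ne_of_adj huv (hρinj h)
        have hs : s(ρ u, ρ v) = e :=
          ((Sym2.mem_and_mem_iff hne).mp ⟨hρmem u hu, hρmem v hv⟩).symm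
        rw [← mem_edgeSet, hs]
        exact he
      · rcases hρadj u v huv with h | h
        · exact (att_adj_emb.mp h).1
        · exact absurd h hc
    have hadjψ : ∀ u v, D.Adj u v → (att D e j).Adj (emb j (ψ u)) (emb j (ψ v)) ∨ s(u,v) = e := by
      intro u v huv
      by_cases hc : s(u,v) = e
      · exact Or.inr hc
      · refine Or.inl ?_
        rw [← hψe, ← hψe]
        exact φ.map_adj_iff.mpr (att_adj_emb.mpr ⟨huv, hc⟩)
    have hadjψ' : ∀ u v, D.Adj u v → (att D e j).Adj (emb j (ψ' u)) (emb j (ψ' v)) ∨ s(u,v) = e := by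
      intro u v huv
      by_cases hc : s(u,v) = e
      · exact Or.inr hc
      · refine Or.inl ?_
        rw [← hψ'e, ← hψ'e]
        exact φ.symm.map_adj_iff.mpr (att_adj_emb.mpr ⟨huv, hc⟩)
    have hψ'inj : Function.Injective ψ' := fun a b h => by
      rw [← hri a, ← hri b, h]
    have hfwdψ := hfwd hmem hψinj hadjψ
    have hfwdψ' := hfwd hmem' hψ'inj hadjψ'
    -- the induced automorphism of D
    let Ψ : D ≃g D :=
      { toFun := ψ
        invFun := ψ'
        left_inv := hli
        right_inv := hri
        map_rel_iff' := by
          intro u v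
          show D.Adj (ψ u) (ψ v) ↔ D.Adj u v
          constructor
          · intro h
            have := hfwdψ' _ _ h
            rwa [hli, hli] at this
          · exact hfwdψ u v }
    have hΨfix : ∀ i, Ψ (Sum.inl i) = Sum.inl i := by
      intro i
      apply emb_inj j
      show emb j (ψ (Sum.inl i)) = emb j (Sum.inl i)
      rw [← hψe]
      exact hfix i.castSucc
    have hΨid := ih D hD Ψ hΨfix
    have hψid : ∀ u, ψ u = u := hΨid
    rcases vt_cases j v with rfl | rfl | ⟨u, rfl⟩
    · exact hw
    · exact hl
    · rw [hψe u, hψid u]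

end Rigid

/-- A tree with `r` labeled leaves, all of whose internal vertices have degree exactly 3,
has exactly `r − 2` internal vertices; so every isomorphism class is represented by a
tree structure on the vertex set `Fin r ⊕ Fin (r − 2)`, with the leaves labeled by
`Fin r`.  A labeled isomorphism between two such trees is a graph isomorphism fixing
each leaf label. -/
def LeafLabeledTrivalentTree (r : ℕ) : Type :=
  {G : SimpleGraph (Fin r ⊕ Fin (r - 2)) // G.IsTree ∧
    (∀ i : Fin r, (G.neighborSet (Sum.inl i)).ncard = 1) ∧
    (∀ j : Fin (r - 2), (G.neighborSet (Sum.inr j)).ncard = 3)}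

/-- Labeled isomorphism of leaf-labeled trees. -/
def labIso {r : ℕ} (G G' : LeafLabeledTrivalentTree r) : Prop :=
  ∃ φ : G.1 ≃g G'.1, ∀ i : Fin r, φ (Sum.inl i) = Sum.inl i

section Classes
variable {n : ℕ}

lemma TT_eq (n : ℕ) : LeafLabeledTrivalentTree (n+3) = TT n := rfl

/-- permutation of internal labels -/
def relabelPerm (σ : Equiv.Perm (Fin (n+1))) : Equiv.Perm (VT n) :=
  Equiv.sumCongr (Equiv.refl _) σ

def relabel (σ : Equiv.Perm (Fin (n+1))) (G : SimpleGraph (VT n)) : SimpleGraph (VT n) :=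
  G.comap (relabelPerm σ).symm

lemma relabel_adj {σ : Equiv.Perm (Fin (n+1))} {G : SimpleGraph (VT n)} {a b : VT n} :
    (relabel σ G).Adj a b ↔ G.Adj ((relabelPerm σ).symm a) ((relabelPerm σ).symm b) :=
  Iff.rfl

/-- the isomorphism from `G` to its relabeling -/
def relabelIso (σ : Equiv.Perm (Fin (n+1))) (G : SimpleGraph (VT n)) :
    G ≃g relabel σ G where
  toEquiv := relabelPerm σ
  map_rel_iff' := by
    intro a b
    rw [relabel_adj, Equiv.symm_apply_apply, Equiv.symm_apply_apply]

lemma relabelPerm_inl (σ : Equiv.Perm (Fin (n+1))) (i : Fin (n+3)) :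
    relabelPerm σ (Sum.inl i) = Sum.inl i := rfl

lemma relabelPerm_symm_inl (σ : Equiv.Perm (Fin (n+1))) (i : Fin (n+3)) :
    (relabelPerm σ).symm (Sum.inl i) = Sum.inl i := rfl

lemma relabelPerm_inr (σ : Equiv.Perm (Fin (n+1))) (k : Fin (n+1)) :
    relabelPerm σ (Sum.inr k) = Sum.inr (σ k) := rfl

lemma relabelPerm_symm_inr (σ : Equiv.Perm (Fin (n+1))) (k : Fin (n+1)) :
    (relabelPerm σ).symm (Sum.inr k) = Sum.inr (σ.symm k) := rfl

lemma goodP_relabel {G : SimpleGraph (VT n)} (hG : goodP G) (σ : Equiv.Perm (Fin (n+1))) :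
    goodP (relabel σ G) := by
  obtain ⟨htree, hleaf, hint⟩ := hG
  have hnbr : ∀ a : VT n, (relabel σ G).neighborSet a
      = (relabelPerm σ) '' (G.neighborSet ((relabelPerm σ).symm a)) := by
    intro a
    ext b
    rw [mem_neighborSet, relabel_adj, Set.mem_image_equiv]
    exact Iff.rfl
  refine ⟨⟨(relabelIso σ G).connected_iff.mp htree.isConnected, ?_⟩, ?_, ?_⟩
  · intro v c hc
    exact htree.IsAcyclic (c.map (relabelIso σ G).symm.toHom)
      (hc.map (relabelIso σ G).symm.toEquiv.injective)
  · intro i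
    rw [hnbr, Set.ncard_image_of_injective _ (relabelPerm σ).injective,
      relabelPerm_symm_inl]
    exact hleaf i
  · intro k
    rw [hnbr, Set.ncard_image_of_injective _ (relabelPerm σ).injective,
      relabelPerm_symm_inr]
    exact hint (σ.symm k)

lemma labIso_equivalence : Equivalence (labIso (r := n+3)) := by
  constructor
  · intro G
    exact ⟨Iso.refl, fun i => rfl⟩
  · rintro G G' ⟨φ, hφ⟩
    refine ⟨φ.symm, fun i => ?_⟩
    conv_lhs => rw [← hφ i]
    exact φ.symm_apply_apply _
  · rintro G G' G'' ⟨φ, hφ⟩ ⟨φ', hφ'⟩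
    refine ⟨φ.trans φ', fun i => ?_⟩
    show φ' (φ (Sum.inl i)) = Sum.inl i
    rw [hφ i, hφ' i]

lemma quot_mk_eq_iff (G G' : LeafLabeledTrivalentTree (n+3)) :
    Quot.mk labIso G = Quot.mk labIso G' ↔ labIso G G' := by
  rw [Quot.eq]
  exact labIso_equivalence.eqvGen_iff

/-- the map from permutations to the labeled-isomorphism class of `G₀` -/
noncomputable def classMap (G₀ : LeafLabeledTrivalentTree (n+3)) :
    Equiv.Perm (Fin (n+1)) → {G : LeafLabeledTrivalentTree (n+3) // labIso G₀ G} :=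
  fun σ => ⟨⟨relabel σ G₀.1, goodP_relabel G₀.2 σ⟩,
    ⟨relabelIso σ G₀.1, fun i => relabelPerm_inl σ i⟩⟩

lemma classMap_bij (G₀ : LeafLabeledTrivalentTree (n+3)) :
    Function.Bijective (classMap G₀) := by
  constructor
  · intro σ τ h
    have heq : relabel σ G₀.1 = relabel τ G₀.1 :=
      congrArg (fun x => x.1.1) h
    have hAdj : ∀ a b : VT n, (relabel σ G₀.1).Adj a b ↔ (relabel τ G₀.1).Adj a b := by
      rw [heq]
      exact fun a b => Iff.rfl
    let χ : G₀.1 ≃g G₀.1 :=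
      { toEquiv := (relabelPerm σ).trans (relabelPerm τ).symm
        map_rel_iff' := by
          intro a b
          show G₀.1.Adj ((relabelPerm τ).symm (relabelPerm σ a))
              ((relabelPerm τ).symm (relabelPerm σ b)) ↔ G₀.1.Adj a b
          have h1 := (hAdj (relabelPerm σ a) (relabelPerm σ b)).symm
          rw [relabel_adj, relabel_adj, Equiv.symm_apply_apply, Equiv.symm_apply_apply] at h1
          exact h1 }
    have hfix : ∀ i, χ (Sum.inl i) = Sum.inl i := fun i => rfl
    have hid := rigid n G₀.1 G₀.2 χ hfix
    apply Equiv.ext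
    intro k
    have := hid (Sum.inr k)
    have h2 : (relabelPerm τ).symm (relabelPerm σ (Sum.inr k)) = Sum.inr k := this
    rw [relabelPerm_inr, relabelPerm_symm_inr] at h2
    have h3 : σ k = τ (τ.symm (σ k)) := (τ.apply_symm_apply _).symm
    rw [Sum.inr.injEq] at h2
    rw [h3, h2]
  · rintro ⟨G, φ, hφ⟩
    have hs : ∀ k : Fin (n+1), ∃ k', φ (Sum.inr k) = Sum.inr k' := by
      intro k
      rcases hk : φ (Sum.inr k) with i | k'
      · exact absurd (φ.injective ((hφ i).trans hk.symm)) (by simp)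
      · exact ⟨k', rfl⟩
    choose s hs using hs
    have hs' : ∀ k : Fin (n+1), ∃ k', φ.symm (Sum.inr k) = Sum.inr k' := by
      intro k
      rcases hk : φ.symm (Sum.inr k) with i | k'
      · exfalso
        have h2 : φ (Sum.inl i) = Sum.inr k := by rw [← hk, φ.apply_symm_apply]
        rw [hφ i] at h2
        simp at h2
      · exact ⟨k', rfl⟩
    choose s' hs'e using hs'
    have hli : ∀ k, s' (s k) = k := by
      intro k
      have : φ.symm (Sum.inr (s k)) = Sum.inr (s' (s k)) := hs'e _
      rw [← hs, φ.symm_apply_apply] at this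
      exact (Sum.inr.injEq _ _).mp this.symm
    have hri : ∀ k, s (s' k) = k := by
      intro k
      have : φ (Sum.inr (s' k)) = Sum.inr (s (s' k)) := hs _
      rw [← hs'e, φ.apply_symm_apply] at this
      exact (Sum.inr.injEq _ _).mp this.symm
    refine ⟨⟨s, s', hli, hri⟩, ?_⟩
    apply Subtype.ext
    apply Subtype.ext
    show relabel ⟨s, s', hli, hri⟩ G₀.1 = G.1
    have hφval : ∀ a : VT n, φ ((relabelPerm ⟨s, s', hli, hri⟩).symm a) = a := by
      intro a
      cases a with
      | inl i =>
        rw [relabelPerm_symm_inl]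
        exact hφ i
      | inr k =>
        rw [relabelPerm_symm_inr]
        show φ (Sum.inr (s' k)) = Sum.inr k
        rw [hs, hri]
    ext a b
    rw [relabel_adj, ← φ.map_adj_iff, hφval, hφval]

instance (n : ℕ) : Finite (LeafLabeledTrivalentTree (n+3)) :=
  inferInstanceAs (Finite {G : SimpleGraph (VT n) // goodP G})

lemma card_classes (n : ℕ) :
    Nat.card (Quot (labIso (r := n+3))) * Nat.factorial (n+1) = Nat.card (TT n) := by
  classical
  letI : Finite (Quot (labIso (r := n+3))) :=
    Finite.of_surjective (Quot.mk _) (Quot.exists_rep)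
  rw [← TT_eq]
  rw [Nat.card_congr (Equiv.sigmaFiberEquiv (Quot.mk (labIso (r := n+3)))).symm]
  rw [nat_card_sigma_const (c := Nat.factorial (n+1))]
  intro q
  have hfib : {G : LeafLabeledTrivalentTree (n+3) // Quot.mk labIso G = q}
      ≃ {G : LeafLabeledTrivalentTree (n+3) // labIso q.out G} := by
    apply Equiv.subtypeEquivRight
    intro G
    conv_lhs => rw [← Quot.out_eq q]
    rw [quot_mk_eq_iff]
    constructor
    · exact fun h => labIso_equivalence.symm h
    · exact fun h => labIso_equivalence.symm h
  rw [Nat.card_congr hfib, ← Nat.card_eq_of_bijective _ (classMap_bij q.out),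
    Nat.card_eq_fintype_card, Fintype.card_perm, Fintype.card_fin]

end Classes

/-- The number of isomorphism classes of trees with `r ≥ 3` labeled leaves in which
every internal vertex has degree exactly 3 is the double factorial
`(2r − 5)!! = 1·3·5·…·(2r−5)`. -/
theorem card_trivalent_leaf_labeled_trees (r : ℕ) (hr : 3 ≤ r) :
    Nat.card (Quot (labIso (r := r))) = Nat.doubleFactorial (2 * r - 5) := by
  obtain ⟨n, rfl⟩ : ∃ n, r = n + 3 := ⟨r - 3, by omega⟩
  have h1 := card_classes n
  rw [card_TT n] at h1
  have h2 : 2 * (n + 3) - 5 = 2 * n + 1 := by omega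
  rw [h2]
  exact Nat.eq_of_mul_eq_mul_right (Nat.factorial_pos _) h1
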